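/- Let K: [0,∞) → [0,∞) be a continuous nondecreasing function with K_0 = 0, g ≥ 0 a Borel function with ∫₀ᵗ g_s dK_s < ∞ for all t and ∫₀^∞ g_s dK_s = ∞, and set ε_t = exp(∫₀ᵗ g_s dK_s). Let Γ: [0,∞) → (0,∞) be a continuous nondecreasing function and Λ: [0,∞) → [0,∞) a nondecreasing right-continuous function such that Λ_t Γ_t^{−2} → 0 as t → ∞. Define B_t = ∫₀ᵗ Γ_s^{−1} dε_s and B̃_t = ∫₀ᵗ (B_t − B_s)² dΛ_s. Then B̃_t / ε_t² → 0 as t → ∞ (hence ε_t B̃_t^{−1/2} → ∞ whenever B̃ is eventually positive). -/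

import Mathlib

open MeasureTheory Set Filter Topology

/-- `ε_t = exp(∫₀ᵗ g_s dK_s)`. -/
noncomputable def epsP (K : StieltjesFunction ℝ) (g : ℝ → ℝ) (t : ℝ) : ℝ :=
  Real.exp (∫ s in Ioc 0 t, g s ∂K.measure)

/-- `B_t = ∫₀ᵗ Γ_s⁻¹ dε_s`; since `K` is continuous, `dε_s = ε_s g_s dK_s`, so
`B_t = ∫₀ᵗ Γ_s⁻¹ ε_s g_s dK_s`. -/
noncomputable def BP (K : StieltjesFunction ℝ) (g Γ : ℝ → ℝ) (t : ℝ) : ℝ :=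
  ∫ s in Ioc 0 t, (Γ s)⁻¹ * epsP K g s * g s ∂K.measure

/-- `B̃_t = ∫₀ᵗ (B_t − B_s)² dΛ_s`. -/
noncomputable def BtildeP (K : StieltjesFunction ℝ) (g Γ : ℝ → ℝ) (Λ : StieltjesFunction ℝ)
    (t : ℝ) : ℝ :=
  ∫ s in Ioc 0 t, (BP K g Γ t - BP K g Γ s) ^ 2 ∂Λ.measure

open scoped ENNReal

namespace RemAux

noncomputable def mug (K : StieltjesFunction ℝ) (g : ℝ → ℝ) : Measure ℝ :=
  K.measure.withDensity fun s => ENNReal.ofReal (g s)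

noncomputable def FP (K : StieltjesFunction ℝ) (g : ℝ → ℝ) (t : ℝ) : ℝ :=
  (mug K g (Ioc 0 t)).toReal

variable {K : StieltjesFunction ℝ} {g : ℝ → ℝ}

lemma mug_apply (A : Set ℝ) (hA : MeasurableSet A) :
    mug K g A = ∫⁻ s in A, ENNReal.ofReal (g s) ∂K.measure :=
  withDensity_apply _ hA

lemma mug_fin (hgloc : ∀ t : ℝ, (∫⁻ s in Ioc 0 t, ENNReal.ofReal (g s) ∂K.measure) < ⊤)
    (t : ℝ) : mug K g (Ioc 0 t) ≠ ⊤ := by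
  rw [mug_apply _ measurableSet_Ioc]; exact (hgloc t).ne

lemma FP_nonneg (t : ℝ) : 0 ≤ FP K g t := ENNReal.toReal_nonneg

lemma FP_mono (hgloc : ∀ t : ℝ, (∫⁻ s in Ioc 0 t, ENNReal.ofReal (g s) ∂K.measure) < ⊤) :
    Monotone (FP K g) := fun s t h =>
  ENNReal.toReal_mono (mug_fin hgloc t) (measure_mono (Ioc_subset_Ioc_right h))

lemma FP_meas (hgloc : ∀ t : ℝ, (∫⁻ s in Ioc 0 t, ENNReal.ofReal (g s) ∂K.measure) < ⊤) :
    Measurable (FP K g) := (FP_mono hgloc).measurable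

lemma mug_Ioc (hgloc : ∀ t : ℝ, (∫⁻ s in Ioc 0 t, ENNReal.ofReal (g s) ∂K.measure) < ⊤)
    (t : ℝ) : mug K g (Ioc 0 t) = ENNReal.ofReal (FP K g t) :=
  (ENNReal.ofReal_toReal (mug_fin hgloc t)).symm

lemma FP_of_nonpos (t : ℝ) (ht : t ≤ 0) : FP K g t = 0 := by
  unfold FP
  rw [Ioc_eq_empty (by exact fun h => absurd (h.trans_le ht) (lt_irrefl 0)), measure_empty]
  rfl

lemma epsP_eq (hgmeas : Measurable g) (hg0 : ∀ t, 0 ≤ g t)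
    (t : ℝ) : epsP K g t = Real.exp (FP K g t) := by
  unfold epsP FP
  congr 1
  rw [integral_eq_lintegral_of_nonneg_ae (ae_of_all _ fun s => hg0 s)
      hgmeas.aestronglyMeasurable, mug_apply _ measurableSet_Ioc]

lemma epsP_pos (t : ℝ) : 0 < epsP K g t := Real.exp_pos _

lemma epsP_meas (hgmeas : Measurable g) (hg0 : ∀ t, 0 ≤ g t)
    (hgloc : ∀ t : ℝ, (∫⁻ s in Ioc 0 t, ENNReal.ofReal (g s) ∂K.measure) < ⊤) :
    Measurable (epsP K g) := by
  have : epsP K g = fun t => Real.exp (FP K g t) := funext fun t => epsP_eq hgmeas hg0 t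
  rw [this]
  exact Real.measurable_exp.comp (FP_meas hgloc)

open Function in
lemma Kmeas_singleton (hKc : Continuous fun x => K x) (x : ℝ) : K.measure {x} = 0 := by
  rw [K.measure_singleton]
  have : Function.leftLim (⇑K) x = K x :=
    leftLim_eq_of_tendsto
      ((hKc.tendsto x).mono_left nhdsWithin_le_nhds)
  simp [this]

lemma mug_singleton (hKc : Continuous fun x => K x) (x : ℝ) : mug K g {x} = 0 :=
  withDensity_absolutelyContinuous K.measure _ (Kmeas_singleton hKc x)


noncomputable def nuE (K : StieltjesFunction ℝ) (g : ℝ → ℝ) : Measure ℝ :=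
  (mug K g).withDensity fun s => ENNReal.ofReal (Real.exp (FP K g s))

variable {K : StieltjesFunction ℝ} {g : ℝ → ℝ}

lemma nuE_apply (A : Set ℝ) (hA : MeasurableSet A) :
    nuE K g A = ∫⁻ s in A, ENNReal.ofReal (Real.exp (FP K g s)) ∂(mug K g) :=
  withDensity_apply _ hA

lemma nuE_le_const (hgloc : ∀ t : ℝ, (∫⁻ s in Ioc 0 t, ENNReal.ofReal (g s) ∂K.measure) < ⊤)
    {A : Set ℝ} (hA : MeasurableSet A) {c : ℝ} (hc : ∀ s ∈ A, FP K g s ≤ c) :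
    nuE K g A ≤ ENNReal.ofReal (Real.exp c) * mug K g A := by
  rw [nuE_apply _ hA]
  calc ∫⁻ s in A, ENNReal.ofReal (Real.exp (FP K g s)) ∂(mug K g)
      ≤ ∫⁻ _ in A, ENNReal.ofReal (Real.exp c) ∂(mug K g) := by
        refine setLIntegral_mono measurable_const fun s hs => ?_
        exact ENNReal.ofReal_le_ofReal (Real.exp_le_exp.2 (hc s hs))
    _ = ENNReal.ofReal (Real.exp c) * mug K g A := by
        rw [setLIntegral_const]

theorem key_exp_bound (hKc : Continuous fun x => K x)
    (hgloc : ∀ t : ℝ, (∫⁻ s in Ioc 0 t, ENNReal.ofReal (g s) ∂K.measure) < ⊤) (t : ℝ) :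
    nuE K g (Ioc 0 t) ≤ ENNReal.ofReal (2 * Real.exp (FP K g t)) := by
  have hmono := FP_mono (K := K) (g := g) hgloc
  have main : ∀ n : ℕ, ∀ t : ℝ, FP K g t ≤ n →
      nuE K g (Ioc 0 t) ≤ ENNReal.ofReal (2 * Real.exp (FP K g t)) := by
    intro n
    induction n with
    | zero =>
      intro t ht
      have hF0 : FP K g t = 0 := le_antisymm (by exact_mod_cast ht) (FP_nonneg t)
      have hmug : mug K g (Ioc 0 t) = 0 := by
        have := mug_Ioc hgloc t
        rw [hF0] at this
        simpa using this
      have : nuE K g (Ioc 0 t) = 0 :=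
        withDensity_absolutelyContinuous (mug K g) _ hmug
      simp [this]
    | succ n ih =>
      intro t ht
      by_cases h1 : FP K g t ≤ 1
      · calc nuE K g (Ioc 0 t)
            ≤ ENNReal.ofReal (Real.exp (FP K g t)) * mug K g (Ioc 0 t) :=
              nuE_le_const hgloc measurableSet_Ioc fun s hs => hmono hs.2
          _ = ENNReal.ofReal (Real.exp (FP K g t)) * ENNReal.ofReal (FP K g t) := by
              rw [mug_Ioc hgloc]
          _ = ENNReal.ofReal (Real.exp (FP K g t) * FP K g t) := by
              rw [ENNReal.ofReal_mul (Real.exp_pos _).le]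
          _ ≤ ENNReal.ofReal (2 * Real.exp (FP K g t)) := by
              apply ENNReal.ofReal_le_ofReal
              nlinarith [Real.exp_pos (FP K g t), FP_nonneg (K := K) (g := g) t]
      push_neg at h1
      set S : Set ℝ := {s : ℝ | FP K g t - 1 ≤ FP K g s} with hS
      have htS : t ∈ S := by simp [hS]
      have hposS : ∀ s ∈ S, 0 < s := by
        intro s hs
        by_contra hle
        push_neg at hle
        have h0 : FP K g s = 0 := FP_of_nonpos s hle
        have hs' : FP K g t - 1 ≤ FP K g s := hs
        rw [h0] at hs'
        linarith
      have hbdd : BddBelow S := ⟨0, fun s hs => (hposS s hs).le⟩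
      set r := sInf S with hr
      have hr0 : 0 ≤ r := le_csInf ⟨t, htS⟩ fun s hs => (hposS s hs).le
      have hrt : r ≤ t := csInf_le hbdd htS
      -- F r ≥ F t - 1
      have hFr : FP K g t - 1 ≤ FP K g r := by
        have hseq : ∀ k : ℕ, ENNReal.ofReal (FP K g t - 1)
            ≤ mug K g (Ioc 0 (r + 1 / (k + 1))) := by
          intro k
          have hrk : r < r + 1 / (k + 1) := by
            have : (0:ℝ) < 1 / (k + 1) := by positivity
            linarith
          obtain ⟨s', hs'S, hs'lt⟩ := (csInf_lt_iff hbdd ⟨t, htS⟩).1 hrk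
          have hs'' : FP K g t - 1 ≤ FP K g s' := hs'S
          calc ENNReal.ofReal (FP K g t - 1) ≤ ENNReal.ofReal (FP K g s') :=
                ENNReal.ofReal_le_ofReal hs''
            _ = mug K g (Ioc 0 s') := (mug_Ioc hgloc s').symm
            _ ≤ mug K g (Ioc 0 (r + 1 / (k + 1))) :=
                measure_mono (Ioc_subset_Ioc_right hs'lt.le)
        have htend : Tendsto (fun k : ℕ => mug K g (Ioc 0 (r + 1 / (k + 1)))) atTop
            (𝓝 (mug K g (Ioc 0 r))) := by
          have hInter : ⋂ k : ℕ, Ioc (0:ℝ) (r + 1 / (k + 1)) = Ioc 0 r := by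
            ext x
            simp only [mem_iInter, mem_Ioc]
            constructor
            · intro h
              refine ⟨(h 0).1, ?_⟩
              by_contra hx
              push_neg at hx
              obtain ⟨k, hk⟩ := exists_nat_one_div_lt (sub_pos.2 hx)
              have := (h k).2
              linarith
            · intro h k
              have : (0:ℝ) < 1 / (k + 1) := by positivity
              exact ⟨h.1, by linarith [h.2]⟩
          have := tendsto_measure_iInter_atTop (μ := mug K g)
            (s := fun k : ℕ => Ioc (0:ℝ) (r + 1 / (k + 1)))
            (fun k => measurableSet_Ioc.nullMeasurableSet)
            (fun i j hij => Ioc_subset_Ioc_right (by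
              have : (1:ℝ) / (j + 1) ≤ 1 / (i + 1) := by
                apply one_div_le_one_div_of_le (by positivity)
                exact_mod_cast add_le_add_left (Nat.cast_le.2 hij) 1
              linarith))
            ⟨0, mug_fin hgloc _⟩
          rwa [hInter] at this
        have := ge_of_tendsto htend (Eventually.of_forall hseq)
        rw [mug_Ioc hgloc r] at this
        exact (ENNReal.ofReal_le_ofReal_iff (FP_nonneg r)).1 this
      -- nuE (Ioo 0 r) bound via ih
      have hIoo : nuE K g (Ioo 0 r) ≤ ENNReal.ofReal (2 * Real.exp (FP K g t - 1)) := by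
        rcases le_or_gt r 0 with hle | hrpos
        · rw [Ioo_eq_empty (by linarith), measure_empty]
          positivity
        · have hUnion : ⋃ k : ℕ, Ioc (0:ℝ) (r - 1 / (k + 1)) = Ioo 0 r := by
            ext x
            simp only [mem_iUnion, mem_Ioc, mem_Ioo]
            constructor
            · rintro ⟨k, hx1, hx2⟩
              have : (0:ℝ) < 1 / (k + 1) := by positivity
              exact ⟨hx1, by linarith⟩
            · rintro ⟨hx1, hx2⟩
              obtain ⟨k, hk⟩ := exists_nat_one_div_lt (sub_pos.2 hx2)
              exact ⟨k, hx1, by linarith⟩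
          have hmonoSet : Monotone fun k : ℕ => Ioc (0:ℝ) (r - 1 / (k + 1)) := by
            intro i j hij
            apply Ioc_subset_Ioc_right
            have : (1:ℝ) / (j + 1) ≤ 1 / (i + 1) := by
              apply one_div_le_one_div_of_le (by positivity)
              exact_mod_cast add_le_add_left (Nat.cast_le.2 hij) 1
            linarith
          have htend := tendsto_measure_iUnion_atTop (μ := nuE K g) hmonoSet
          rw [hUnion] at htend
          refine le_of_tendsto htend (Eventually.of_forall fun k => ?_)
          have hnotS : r - 1 / (k + 1) ∉ S := by
            intro hmem
            have : r ≤ r - 1 / (k + 1) := csInf_le hbdd hmem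
            have : (0:ℝ) < 1 / (k + 1) := by positivity
            linarith
          have hFk0 : FP K g (r - 1 / (k + 1)) + 1 < FP K g t := by
            simpa [hS, not_le] using hnotS
          have hFk : FP K g (r - 1 / (k + 1)) < FP K g t - 1 := by linarith
          have hFkn : FP K g (r - 1 / (k + 1)) ≤ n := by
            push_cast at ht ⊢
            linarith
          calc nuE K g (Ioc 0 (r - 1 / (k + 1)))
              ≤ ENNReal.ofReal (2 * Real.exp (FP K g (r - 1 / (k + 1)))) := ih _ hFkn
            _ ≤ ENNReal.ofReal (2 * Real.exp (FP K g t - 1)) := by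
                apply ENNReal.ofReal_le_ofReal
                have := Real.exp_le_exp.2 hFk.le
                linarith
      -- nuE (Icc r t) bound
      have hIcc : nuE K g (Icc r t) ≤ ENNReal.ofReal (Real.exp (FP K g t)) := by
        have hsub : Icc r t ⊆ {r} ∪ Ioc r t := by
          intro x hx
          rcases eq_or_lt_of_le hx.1 with h | h
          · exact Or.inl (by simp [← h])
          · exact Or.inr ⟨h, hx.2⟩
        have hr_null : nuE K g {r} = 0 :=
          withDensity_absolutelyContinuous (mug K g) _ (mug_singleton hKc r)
        have hmugIoc : mug K g (Ioc r t) ≤ ENNReal.ofReal 1 := by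
          have hadd : ENNReal.ofReal (FP K g t)
              = ENNReal.ofReal (FP K g r) + mug K g (Ioc r t) := by
            rw [← mug_Ioc hgloc, ← mug_Ioc hgloc,
              ← measure_union (Set.Ioc_disjoint_Ioc_of_le le_rfl) measurableSet_Ioc,
              Ioc_union_Ioc_eq_Ioc hr0 hrt]
          have hle : ENNReal.ofReal (FP K g r) + mug K g (Ioc r t)
              ≤ ENNReal.ofReal (FP K g r) + ENNReal.ofReal 1 := by
            rw [← hadd, ← ENNReal.ofReal_add (FP_nonneg r) one_pos.le]
            exact ENNReal.ofReal_le_ofReal (by linarith)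
          exact ENNReal.add_le_add_iff_left ENNReal.ofReal_ne_top |>.1 hle
        calc nuE K g (Icc r t) ≤ nuE K g ({r} ∪ Ioc r t) := measure_mono hsub
          _ ≤ nuE K g {r} + nuE K g (Ioc r t) := measure_union_le _ _
          _ = nuE K g (Ioc r t) := by rw [hr_null, zero_add]
          _ ≤ ENNReal.ofReal (Real.exp (FP K g t)) * mug K g (Ioc r t) :=
              nuE_le_const hgloc measurableSet_Ioc fun s hs => hmono hs.2
          _ ≤ ENNReal.ofReal (Real.exp (FP K g t)) * ENNReal.ofReal 1 := by
              exact mul_le_mul_right hmugIoc _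
          _ = ENNReal.ofReal (Real.exp (FP K g t)) := by
              simp
      -- combine
      have hcover : Ioc (0:ℝ) t ⊆ Ioo 0 r ∪ Icc r t := by
        intro x hx
        rcases lt_or_ge x r with h | h
        · exact Or.inl ⟨hx.1, h⟩
        · exact Or.inr ⟨h, hx.2⟩
      calc nuE K g (Ioc 0 t) ≤ nuE K g (Ioo 0 r ∪ Icc r t) := measure_mono hcover
        _ ≤ nuE K g (Ioo 0 r) + nuE K g (Icc r t) := measure_union_le _ _
        _ ≤ ENNReal.ofReal (2 * Real.exp (FP K g t - 1))
            + ENNReal.ofReal (Real.exp (FP K g t)) := add_le_add hIoo hIcc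
        _ = ENNReal.ofReal (2 * Real.exp (FP K g t - 1) + Real.exp (FP K g t)) := by
            rw [← ENNReal.ofReal_add (by positivity) (Real.exp_pos _).le]
        _ ≤ ENNReal.ofReal (2 * Real.exp (FP K g t)) := by
            apply ENNReal.ofReal_le_ofReal
            rw [Real.exp_sub]
            have he : (2:ℝ) ≤ Real.exp 1 := by
              have := Real.add_one_le_exp (1:ℝ)
              linarith
            have hp := Real.exp_pos (FP K g t)
            have h1e : Real.exp (FP K g t) / Real.exp 1 ≤ Real.exp (FP K g t) / 2 := by
              apply div_le_div_of_nonneg_left hp.le (by norm_num) he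
            linarith
  exact main ⌈FP K g t⌉₊ t (Nat.le_ceil _)

noncomputable def Mfun (K : StieltjesFunction ℝ) (g : ℝ → ℝ) (t : ℝ) : ℝ≥0∞ :=
  ∫⁻ s in Ioc 0 t, ENNReal.ofReal (epsP K g s) * ENNReal.ofReal (g s) ∂K.measure

noncomputable def hfun (K : StieltjesFunction ℝ) (g Γ : ℝ → ℝ) (s : ℝ) : ℝ≥0∞ :=
  ENNReal.ofReal ((Γ s)⁻¹) * (ENNReal.ofReal (epsP K g s) * ENNReal.ofReal (g s))

noncomputable def HH (K : StieltjesFunction ℝ) (g Γ : ℝ → ℝ) (t : ℝ) : ℝ≥0∞ :=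
  ∫⁻ s in Ioc 0 t, hfun K g Γ s ∂K.measure

variable {K : StieltjesFunction ℝ} {g Γ : ℝ → ℝ}

lemma Mfun_le (hKc : Continuous fun x => K x) (hgmeas : Measurable g) (hg0 : ∀ t, 0 ≤ g t)
    (hgloc : ∀ t : ℝ, (∫⁻ s in Ioc 0 t, ENNReal.ofReal (g s) ∂K.measure) < ⊤) (t : ℝ) :
    Mfun K g t ≤ ENNReal.ofReal (2 * epsP K g t) := by
  have heq : Mfun K g t = nuE K g (Ioc 0 t) := by
    rw [nuE_apply _ measurableSet_Ioc]
    unfold Mfun mug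
    have hEmeas : Measurable fun s => ENNReal.ofReal (Real.exp (FP K g s)) :=
      (Real.measurable_exp.comp (FP_meas hgloc)).ennreal_ofReal
    rw [restrict_withDensity measurableSet_Ioc,
      lintegral_withDensity_eq_lintegral_mul _ hgmeas.ennreal_ofReal hEmeas]
    refine lintegral_congr fun s => ?_
    simp only [Pi.mul_apply]
    rw [epsP_eq hgmeas hg0, mul_comm]
  rw [heq, epsP_eq hgmeas hg0]
  exact key_exp_bound hKc hgloc t

lemma hfun_mul_Gamma (hΓpos : ∀ s, 0 < Γ s) (s : ℝ) :
    hfun K g Γ s * ENNReal.ofReal (Γ s)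
      = ENNReal.ofReal (epsP K g s) * ENNReal.ofReal (g s) := by
  unfold hfun
  rw [mul_comm, ← mul_assoc, ← ENNReal.ofReal_mul (hΓpos s).le,
    mul_inv_cancel₀ (hΓpos s).ne', ENNReal.ofReal_one, one_mul]

lemma HH_le (hΓmono : Monotone Γ) (hΓpos : ∀ s, 0 < Γ s) (t : ℝ) :
    HH K g Γ t ≤ ENNReal.ofReal ((Γ 0)⁻¹) * Mfun K g t := by
  unfold HH Mfun
  rw [← lintegral_const_mul' _ _ ENNReal.ofReal_ne_top]
  refine setLIntegral_mono' measurableSet_Ioc fun s hs => ?_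
  unfold hfun
  refine mul_le_mul_left (ENNReal.ofReal_le_ofReal ?_) _
  exact inv_anti₀ (hΓpos 0) (hΓmono hs.1.le)

lemma HH_mono : Monotone (HH K g Γ) := fun s t h =>
  lintegral_mono_set (Ioc_subset_Ioc_right h)

lemma HH_meas : Measurable (HH K g Γ) := HH_mono.measurable

lemma HH_fin (hKc : Continuous fun x => K x) (hgmeas : Measurable g) (hg0 : ∀ t, 0 ≤ g t)
    (hgloc : ∀ t : ℝ, (∫⁻ s in Ioc 0 t, ENNReal.ofReal (g s) ∂K.measure) < ⊤)
    (hΓmono : Monotone Γ) (hΓpos : ∀ s, 0 < Γ s) (t : ℝ) :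
    HH K g Γ t ≠ ⊤ := by
  refine ne_top_of_le_ne_top ?_ ((HH_le hΓmono hΓpos t).trans
    (mul_le_mul_right (Mfun_le hKc hgmeas hg0 hgloc t) _))
  exact ENNReal.mul_ne_top ENNReal.ofReal_ne_top ENNReal.ofReal_ne_top

lemma BP_eq (hgmeas : Measurable g) (hg0 : ∀ t, 0 ≤ g t)
    (hgloc : ∀ t : ℝ, (∫⁻ s in Ioc 0 t, ENNReal.ofReal (g s) ∂K.measure) < ⊤)
    (hΓc : Continuous Γ) (hΓpos : ∀ s, 0 < Γ s) (t : ℝ) :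
    BP K g Γ t = (HH K g Γ t).toReal := by
  unfold BP HH
  rw [integral_eq_lintegral_of_nonneg_ae (ae_of_all _ fun s =>
      mul_nonneg (mul_nonneg (inv_nonneg.2 (hΓpos s).le) (epsP_pos s).le) (hg0 s))
      ((hΓc.measurable.inv.mul (epsP_meas hgmeas hg0 hgloc)).mul
       hgmeas).aestronglyMeasurable]
  congr 1
  refine setLIntegral_congr_fun measurableSet_Ioc (fun s _ => ?_)
  unfold hfun
  rw [ENNReal.ofReal_mul (mul_nonneg (inv_nonneg.2 (hΓpos s).le) (epsP_pos s).le),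
    ENNReal.ofReal_mul (inv_nonneg.2 (hΓpos s).le), mul_assoc]

lemma BP_nonneg (hgmeas : Measurable g) (hg0 : ∀ t, 0 ≤ g t)
    (hgloc : ∀ t : ℝ, (∫⁻ s in Ioc 0 t, ENNReal.ofReal (g s) ∂K.measure) < ⊤)
    (hΓc : Continuous Γ) (hΓpos : ∀ s, 0 < Γ s) (t : ℝ) : 0 ≤ BP K g Γ t := by
  rw [BP_eq hgmeas hg0 hgloc hΓc hΓpos]; exact ENNReal.toReal_nonneg

lemma BP_diff (hKc : Continuous fun x => K x) (hgmeas : Measurable g) (hg0 : ∀ t, 0 ≤ g t)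
    (hgloc : ∀ t : ℝ, (∫⁻ s in Ioc 0 t, ENNReal.ofReal (g s) ∂K.measure) < ⊤)
    (hΓc : Continuous Γ) (hΓmono : Monotone Γ) (hΓpos : ∀ s, 0 < Γ s)
    {s t : ℝ} (h0s : 0 ≤ s) (hst : s ≤ t) :
    ENNReal.ofReal (BP K g Γ t - BP K g Γ s)
      = ∫⁻ u in Ioc s t, hfun K g Γ u ∂K.measure := by
  have hsplit : HH K g Γ t = HH K g Γ s + ∫⁻ u in Ioc s t, hfun K g Γ u ∂K.measure := by
    unfold HH
    rw [← Ioc_union_Ioc_eq_Ioc h0s hst,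
      lintegral_union measurableSet_Ioc (Set.Ioc_disjoint_Ioc_of_le le_rfl)]
  have hDfin : (∫⁻ u in Ioc s t, hfun K g Γ u ∂K.measure) ≠ ⊤ :=
    ne_top_of_le_ne_top (HH_fin hKc hgmeas hg0 hgloc hΓmono hΓpos t) (hsplit ▸ le_add_self)
  rw [BP_eq hgmeas hg0 hgloc hΓc hΓpos, BP_eq hgmeas hg0 hgloc hΓc hΓpos, hsplit,
    ENNReal.toReal_add (HH_fin hKc hgmeas hg0 hgloc hΓmono hΓpos s) hDfin,
    add_sub_cancel_left, ENNReal.ofReal_toReal hDfin]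

noncomputable def LL (K : StieltjesFunction ℝ) (g Γ : ℝ → ℝ) (Λ : StieltjesFunction ℝ)
    (t : ℝ) : ℝ≥0∞ :=
  ∫⁻ s in Ioc 0 t, (∫⁻ u in Ioc s t, hfun K g Γ u ∂K.measure) ^ 2 ∂Λ.measure

lemma Btilde_eq (hKc : Continuous fun x => K x) (hgmeas : Measurable g) (hg0 : ∀ t, 0 ≤ g t)
    (hgloc : ∀ t : ℝ, (∫⁻ s in Ioc 0 t, ENNReal.ofReal (g s) ∂K.measure) < ⊤)
    (hΓc : Continuous Γ) (hΓmono : Monotone Γ) (hΓpos : ∀ s, 0 < Γ s)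
    (Λ : StieltjesFunction ℝ) (t : ℝ) :
    BtildeP K g Γ Λ t = (LL K g Γ Λ t).toReal := by
  have hBPmeas : Measurable (BP K g Γ) := by
    have : BP K g Γ = fun s => (HH K g Γ s).toReal :=
      funext fun s => BP_eq hgmeas hg0 hgloc hΓc hΓpos s
    rw [this]
    exact ENNReal.measurable_toReal.comp HH_meas
  unfold BtildeP LL
  rw [integral_eq_lintegral_of_nonneg_ae (f := fun s => (BP K g Γ t - BP K g Γ s) ^ 2)
    (ae_of_all _ fun s => sq_nonneg _)
    ((measurable_const.sub hBPmeas).pow_const 2).aestronglyMeasurable]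
  congr 1
  refine setLIntegral_congr_fun measurableSet_Ioc (fun s hs => ?_)
  have hmono : BP K g Γ s ≤ BP K g Γ t := by
    rw [BP_eq hgmeas hg0 hgloc hΓc hΓpos, BP_eq hgmeas hg0 hgloc hΓc hΓpos]
    exact ENNReal.toReal_mono (HH_fin hKc hgmeas hg0 hgloc hΓmono hΓpos t) (HH_mono hs.2)
  rw [ENNReal.ofReal_pow (sub_nonneg.2 hmono),
    BP_diff hKc hgmeas hg0 hgloc hΓc hΓmono hΓpos hs.1.le hs.2]


section LLBound

variable {K : StieltjesFunction ℝ} {g Γ : ℝ → ℝ}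

lemma hfun_meas (hgmeas : Measurable g) (hg0 : ∀ t, 0 ≤ g t)
    (hgloc : ∀ t : ℝ, (∫⁻ s in Ioc 0 t, ENNReal.ofReal (g s) ∂K.measure) < ⊤)
    (hΓc : Continuous Γ) : Measurable (hfun K g Γ) :=
  (hΓc.measurable.inv.ennreal_ofReal).mul
    (((epsP_meas hgmeas hg0 hgloc).ennreal_ofReal).mul hgmeas.ennreal_ofReal)

lemma LL_bound (hKc : Continuous fun x => K x) (hgmeas : Measurable g) (hg0 : ∀ t, 0 ≤ g t)
    (hgloc : ∀ t : ℝ, (∫⁻ s in Ioc 0 t, ENNReal.ofReal (g s) ∂K.measure) < ⊤)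
    (hΓc : Continuous Γ) (hΓmono : Monotone Γ) (hΓpos : ∀ s, 0 < Γ s)
    (Λ : StieltjesFunction ℝ) (hΛ0 : ∀ t : ℝ, 0 ≤ t → 0 ≤ Λ t)
    {a δ : ℝ} (ha : 0 ≤ a) (hδ : 0 ≤ δ)
    (hbound : ∀ s, a ≤ s → Λ s ≤ δ * Γ s ^ 2) (t : ℝ) :
    LL K g Γ Λ t ≤ 2 * (ENNReal.ofReal (Λ a) * HH K g Γ a) * HH K g Γ t
      + ENNReal.ofReal δ * (Mfun K g t) ^ 2 := by
  classical
  set μ := K.measure with hμ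
  set ν' := Λ.measure.restrict (Ioc 0 t) with hν'
  set φ := hfun K g Γ with hφdef
  have hφ : Measurable φ := hfun_meas hgmeas hg0 hgloc hΓc
  set f1 : ℝ → ℝ → ℝ≥0∞ := fun s u => (Ioc s t).indicator φ u with hf1def
  have hf1meas : Measurable (Function.uncurry f1) := by
    have heq : Function.uncurry f1
        = fun p : ℝ × ℝ => ({q : ℝ × ℝ | q.1 < q.2 ∧ q.2 ≤ t}).indicator (fun q => φ q.2) p := by
      funext p
      simp only [Function.uncurry, hf1def, Set.indicator_apply, mem_Ioc, mem_setOf_eq]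
    rw [heq]
    refine Measurable.indicator (hφ.comp measurable_snd) ?_
    exact (measurableSet_lt measurable_fst measurable_snd).inter
      (measurable_snd measurableSet_Iic)
  have hf1meas_fst : ∀ u : ℝ, Measurable fun s => f1 s u := fun u =>
    hf1meas.comp (measurable_id.prodMk measurable_const)
  have hf1meas_snd : ∀ s : ℝ, Measurable (f1 s) := fun s =>
    hφ.indicator measurableSet_Ioc
  set J : ℝ → ℝ≥0∞ := fun s => ∫⁻ v, f1 s v ∂μ with hJdef
  have hJanti : Antitone J := by
    intro s s' h
    refine lintegral_mono fun v => ?_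
    exact Set.indicator_le_indicator_of_subset (Ioc_subset_Ioc_left h) (fun _ => zero_le) v
  have hJmeas : Measurable J := hJanti.measurable
  -- the inner-s integral
  set W : ℝ → ℝ → ℝ≥0∞ := fun u v => ∫⁻ s, f1 s u * f1 s v ∂ν' with hWdef
  -- Step A-D : LL t = ∫⁻ u, ∫⁻ v, W u v ∂μ ∂μ
  have hkey : LL K g Γ Λ t = ∫⁻ u, ∫⁻ v, W u v ∂μ ∂μ := by
    have hA : LL K g Γ Λ t = ∫⁻ s, ∫⁻ u, f1 s u * J s ∂μ ∂ν' := by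
      unfold LL
      refine lintegral_congr fun s => ?_
      rw [sq, ← lintegral_indicator measurableSet_Ioc]
      rw [lintegral_mul_const'' _ (hf1meas_snd s).aemeasurable]
    have hswap1 : ∫⁻ s, ∫⁻ u, f1 s u * J s ∂μ ∂ν' = ∫⁻ u, ∫⁻ s, f1 s u * J s ∂ν' ∂μ := by
      apply lintegral_lintegral_swap
      exact (hf1meas.mul (hJmeas.comp measurable_fst)).aemeasurable
    have hC : ∀ u : ℝ, (∫⁻ s, f1 s u * J s ∂ν') = ∫⁻ v, ∫⁻ s, f1 s u * f1 s v ∂ν' ∂μ := by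
      intro u
      have h1 : (∫⁻ s, f1 s u * J s ∂ν') = ∫⁻ s, ∫⁻ v, f1 s u * f1 s v ∂μ ∂ν' := by
        refine lintegral_congr fun s => ?_
        rw [lintegral_const_mul'' _ (hf1meas_snd s).aemeasurable]
      rw [h1]
      apply lintegral_lintegral_swap
      exact ((hf1meas_fst u).comp measurable_fst).mul hf1meas |>.aemeasurable
    rw [hA, hswap1]
    exact lintegral_congr fun u => hC u
  -- Step E : W u v ≤ X u * X v * Λ.measure (Ioo 0 (min u v))
  set X : ℝ → ℝ≥0∞ := fun u => (Ioc 0 t).indicator φ u with hXdef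
  have hXmeas : Measurable X := hφ.indicator measurableSet_Ioc
  have hE : ∀ u v : ℝ, W u v ≤ X u * X v * Λ.measure (Ioo 0 (min u v)) := by
    intro u v
    have hpt : ∀ s ∈ Ioc (0:ℝ) t, f1 s u * f1 s v
        ≤ (Ioo 0 (min u v)).indicator (fun _ => X u * X v) s := by
      intro s hs
      by_cases hu : u ∈ Ioc s t
      · by_cases hv : v ∈ Ioc s t
        · have hsm : s ∈ Ioo 0 (min u v) := ⟨hs.1, lt_min hu.1 hv.1⟩
          have hXu : X u = φ u := by
            rw [hXdef]; exact Set.indicator_of_mem (mem_Ioc.2 ⟨hs.1.trans hu.1, hu.2⟩) φ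
          have hXv : X v = φ v := by
            rw [hXdef]; exact Set.indicator_of_mem (mem_Ioc.2 ⟨hs.1.trans hv.1, hv.2⟩) φ
          rw [Set.indicator_of_mem hsm, hXu, hXv, hf1def]
          simp only [Set.indicator_of_mem hu, Set.indicator_of_mem hv, le_refl]
        · rw [hf1def]
          simp only [Set.indicator_of_notMem hv, mul_zero]
          exact zero_le
      · rw [hf1def]
        simp only [Set.indicator_of_notMem hu, zero_mul]
        exact zero_le
    calc W u v ≤ ∫⁻ s in Ioc 0 t,
          (Ioo 0 (min u v)).indicator (fun _ => X u * X v) s ∂Λ.measure :=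
            setLIntegral_mono' measurableSet_Ioc hpt
      _ ≤ ∫⁻ s, (Ioo 0 (min u v)).indicator (fun _ => X u * X v) s ∂Λ.measure :=
            setLIntegral_le_lintegral _ _
      _ = X u * X v * Λ.measure (Ioo 0 (min u v)) := by
            rw [lintegral_indicator_const measurableSet_Ioo]
  -- Step F : measure bound
  set c1 : ℝ≥0∞ := ENNReal.ofReal (Λ a) with hc1
  set c2 : ℝ≥0∞ := ENNReal.ofReal δ with hc2
  set γ : ℝ → ℝ≥0∞ := fun u => ENNReal.ofReal (Γ u) with hγ
  have hγmeas : Measurable γ := hΓc.measurable.ennreal_ofReal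
  have hF : ∀ u v : ℝ, X u * X v * Λ.measure (Ioo 0 (min u v))
      ≤ X u * X v * ((if min u v ≤ a then c1 else 0) + c2 * (γ u * γ v)) := by
    intro u v
    by_cases hu : u ∈ Ioc (0:ℝ) t
    · by_cases hv : v ∈ Ioc (0:ℝ) t
      · refine mul_le_mul_right ?_ _
        have hm0 : (0:ℝ) < min u v := lt_min hu.1 hv.1
        have hΛm : Λ.measure (Ioo 0 (min u v)) ≤ ENNReal.ofReal (Λ (min u v)) := by
          calc Λ.measure (Ioo 0 (min u v)) ≤ Λ.measure (Ioc 0 (min u v)) :=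
                measure_mono Ioo_subset_Ioc_self
            _ = ENNReal.ofReal (Λ (min u v) - Λ 0) := Λ.measure_Ioc 0 (min u v)
            _ ≤ ENNReal.ofReal (Λ (min u v)) :=
                ENNReal.ofReal_le_ofReal (by linarith [hΛ0 0 le_rfl])
        by_cases hma : min u v ≤ a
        · rw [if_pos hma]
          refine le_trans (hΛm.trans ?_) le_self_add
          exact ENNReal.ofReal_le_ofReal (Λ.mono hma)
        · rw [if_neg hma]
          push_neg at hma
          refine le_trans (hΛm.trans ?_) (le_add_self)
          calc ENNReal.ofReal (Λ (min u v)) ≤ ENNReal.ofReal (δ * Γ (min u v) ^ 2) :=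
                ENNReal.ofReal_le_ofReal (hbound _ hma.le)
            _ = c2 * (ENNReal.ofReal (Γ (min u v)) * ENNReal.ofReal (Γ (min u v))) := by
                rw [hc2, ← ENNReal.ofReal_mul (hΓpos _).le, ← ENNReal.ofReal_mul hδ, sq]
            _ ≤ c2 * (γ u * γ v) := by
                refine mul_le_mul_right (mul_le_mul' ?_ ?_) _
                · exact ENNReal.ofReal_le_ofReal (hΓmono (min_le_left u v))
                · exact ENNReal.ofReal_le_ofReal (hΓmono (min_le_right u v))
      · rw [hXdef]
        simp only [Set.indicator_of_notMem hv, mul_zero, zero_mul, le_refl]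
    · rw [hXdef]
      simp only [Set.indicator_of_notMem hu, zero_mul, le_refl]
  -- single-integral identities
  have hXint : ∫⁻ u, X u ∂μ = HH K g Γ t := by
    rw [hXdef]
    exact lintegral_indicator measurableSet_Ioc φ
  have hite_meas : Measurable (fun u : ℝ => if u ≤ a then c1 else 0) := by
    have h : (fun u : ℝ => if u ≤ a then c1 else 0) = (Iic a).indicator fun _ => c1 := by
      funext u; simp [Set.indicator_apply, mem_Iic]
    rw [h]; exact measurable_const.indicator measurableSet_Iic
  have hXa : ∫⁻ u, X u * (if u ≤ a then c1 else 0) ∂μ ≤ c1 * HH K g Γ a := by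
    have hpt : ∀ u, X u * (if u ≤ a then c1 else 0)
        = c1 * (Ioc 0 t ∩ Iic a).indicator φ u := by
      intro u
      by_cases hu : u ∈ Ioc (0:ℝ) t
      · by_cases hua : u ≤ a
        · rw [hXdef]
          simp only [Set.indicator_of_mem hu, if_pos hua,
            Set.indicator_of_mem (mem_inter hu (mem_Iic.2 hua)), mul_comm]
        · rw [hXdef]
          simp only [Set.indicator_of_mem hu, if_neg hua, mul_zero,
            Set.indicator_of_notMem (fun h => hua (mem_Iic.1 h.2) : u ∉ Ioc 0 t ∩ Iic a)]
      · rw [hXdef]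
        simp only [Set.indicator_of_notMem hu, zero_mul,
          Set.indicator_of_notMem (fun h => hu h.1 : u ∉ Ioc 0 t ∩ Iic a), mul_zero]
    calc (∫⁻ u, X u * (if u ≤ a then c1 else 0) ∂μ)
        = c1 * ∫⁻ u, (Ioc 0 t ∩ Iic a).indicator φ u ∂μ := by
          simp_rw [hpt]
          rw [lintegral_const_mul'' _
            ((hφ.indicator (measurableSet_Ioc.inter measurableSet_Iic)).aemeasurable)]
      _ = c1 * ∫⁻ u in Ioc 0 t ∩ Iic a, φ u ∂μ := by
          rw [lintegral_indicator (measurableSet_Ioc.inter measurableSet_Iic)]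
      _ ≤ c1 * HH K g Γ a := by
          refine mul_le_mul_right (lintegral_mono_set ?_) _
          rintro x ⟨hx1, hx2⟩; exact ⟨hx1.1, hx2⟩
  have hXγ : ∫⁻ u, X u * γ u ∂μ = Mfun K g t := by
    have hpt : ∀ u, X u * γ u = (Ioc 0 t).indicator (fun u => φ u * γ u) u := by
      intro u
      by_cases hu : u ∈ Ioc (0:ℝ) t
      · rw [hXdef]; simp only [Set.indicator_of_mem hu]
      · rw [hXdef]; simp only [Set.indicator_of_notMem hu, zero_mul]
    simp_rw [hpt]
    rw [lintegral_indicator measurableSet_Ioc]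
    unfold Mfun
    refine setLIntegral_congr_fun measurableSet_Ioc (fun s _ => ?_)
    rw [hφdef, hγ]
    exact hfun_mul_Gamma hΓpos s
  -- pointwise split of the weight
  have hsplit : ∀ u v : ℝ, X u * X v * ((if min u v ≤ a then c1 else 0) + c2 * (γ u * γ v))
      ≤ X u * X v * (if u ≤ a then c1 else 0) + X u * X v * (if v ≤ a then c1 else 0)
        + X u * X v * (c2 * (γ u * γ v)) := by
    intro u v
    have hite : (if min u v ≤ a then c1 else 0)
        ≤ (if u ≤ a then c1 else 0) + (if v ≤ a then c1 else 0) := by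
      by_cases hm : min u v ≤ a
      · rcases min_le_iff.1 hm with h | h
        · rw [if_pos hm, if_pos h]; exact le_self_add
        · rw [if_pos hm, if_pos h]; exact le_add_self
      · rw [if_neg hm]; exact zero_le
    calc X u * X v * ((if min u v ≤ a then c1 else 0) + c2 * (γ u * γ v))
        = X u * X v * (if min u v ≤ a then c1 else 0)
          + X u * X v * (c2 * (γ u * γ v)) := mul_add _ _ _
      _ ≤ (X u * X v * (if u ≤ a then c1 else 0) + X u * X v * (if v ≤ a then c1 else 0))
          + X u * X v * (c2 * (γ u * γ v)) := by
          refine add_le_add_left ?_ _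
          calc X u * X v * (if min u v ≤ a then c1 else 0)
              ≤ X u * X v * ((if u ≤ a then c1 else 0) + (if v ≤ a then c1 else 0)) :=
                mul_le_mul_right hite _
            _ = _ := mul_add _ _ _
      _ = _ := rfl
  -- inner (v) integral of the split integrand
  set Dv : ℝ≥0∞ := ∫⁻ v, X v * (if v ≤ a then c1 else 0) ∂μ with hDv
  have hinner : ∀ u : ℝ, (∫⁻ v, (X u * X v * (if u ≤ a then c1 else 0)
        + X u * X v * (if v ≤ a then c1 else 0)
        + X u * X v * (c2 * (γ u * γ v))) ∂μ)
      = (X u * (if u ≤ a then c1 else 0)) * HH K g Γ t + X u * Dv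
        + (c2 * (X u * γ u)) * Mfun K g t := by
    intro u
    have m1 : Measurable fun v => X u * X v * (if u ≤ a then c1 else 0) := by
      apply Measurable.mul _ measurable_const
      exact measurable_const.mul hXmeas
    have m2 : Measurable fun v => X u * X v * (if v ≤ a then c1 else 0) :=
      (measurable_const.mul hXmeas).mul hite_meas
    rw [lintegral_add_left (f := fun v => X u * X v * (if u ≤ a then c1 else 0)
      + X u * X v * (if v ≤ a then c1 else 0)) (m1.add m2), lintegral_add_left m1]
    congr 1
    · congr 1
      · have : ∀ v, X u * X v * (if u ≤ a then c1 else 0)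
            = (X u * (if u ≤ a then c1 else 0)) * X v := fun v => by ring
        simp_rw [this]
        rw [lintegral_const_mul'' _ hXmeas.aemeasurable, hXint]
      · have : ∀ v, X u * X v * (if v ≤ a then c1 else 0)
            = X u * (X v * (if v ≤ a then c1 else 0)) := fun v => by ring
        simp_rw [this]
        rw [lintegral_const_mul'' _ (f := fun v => X v * (if v ≤ a then c1 else 0))
            (hXmeas.mul hite_meas).aemeasurable]
    · have : ∀ v, X u * X v * (c2 * (γ u * γ v))
          = (c2 * (X u * γ u)) * (X v * γ v) := fun v => by ring
      simp_rw [this]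
      rw [lintegral_const_mul'' _ (f := fun v => X v * γ v) (hXmeas.mul hγmeas).aemeasurable, hXγ]
  -- assemble
  calc LL K g Γ Λ t = ∫⁻ u, ∫⁻ v, W u v ∂μ ∂μ := hkey
    _ ≤ ∫⁻ u, ∫⁻ v, (X u * X v * (if u ≤ a then c1 else 0)
          + X u * X v * (if v ≤ a then c1 else 0)
          + X u * X v * (c2 * (γ u * γ v))) ∂μ ∂μ := by
        refine lintegral_mono fun u => lintegral_mono fun v => ?_
        exact ((hE u v).trans (hF u v)).trans (hsplit u v)
    _ = ∫⁻ u, ((X u * (if u ≤ a then c1 else 0)) * HH K g Γ t + X u * Dv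
          + (c2 * (X u * γ u)) * Mfun K g t) ∂μ := lintegral_congr hinner
    _ = (∫⁻ u, (X u * (if u ≤ a then c1 else 0)) * HH K g Γ t ∂μ)
          + (∫⁻ u, X u * Dv ∂μ) + ∫⁻ u, (c2 * (X u * γ u)) * Mfun K g t ∂μ := by
        have m1 : Measurable fun u => (X u * (if u ≤ a then c1 else 0)) * HH K g Γ t :=
          (hXmeas.mul hite_meas).mul measurable_const
        have m2 : Measurable fun u => X u * Dv := hXmeas.mul measurable_const
        rw [lintegral_add_left (f := fun u =>
          (X u * (if u ≤ a then c1 else 0)) * HH K g Γ t + X u * Dv) (m1.add m2), lintegral_add_left m1]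
    _ ≤ (c1 * HH K g Γ a) * HH K g Γ t + HH K g Γ t * (c1 * HH K g Γ a)
          + c2 * (Mfun K g t) ^ 2 := by
        refine add_le_add (add_le_add ?_ ?_) ?_
        · rw [lintegral_mul_const'' _ (f := fun u => X u * (if u ≤ a then c1 else 0))
            (hXmeas.mul hite_meas).aemeasurable]
          exact mul_le_mul_left hXa _
        · rw [lintegral_mul_const'' _ hXmeas.aemeasurable, hXint]
          exact mul_le_mul_right hXa _
        · rw [lintegral_mul_const'' _ (f := fun u => c2 * (X u * γ u)) (measurable_const.mul
            (hXmeas.mul hγmeas)).aemeasurable,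
            lintegral_const_mul'' _ (f := fun u => X u * γ u) (hXmeas.mul hγmeas).aemeasurable, hXγ, sq]
          rw [mul_assoc]
    _ = 2 * (c1 * HH K g Γ a) * HH K g Γ t + c2 * (Mfun K g t) ^ 2 := by
        rw [mul_comm (HH K g Γ t) (c1 * HH K g Γ a), ← two_mul, ← mul_assoc]

end LLBound

section Assembly

variable {K : StieltjesFunction ℝ} {g Γ : ℝ → ℝ}

lemma eps_tendsto (hgmeas : Measurable g) (hg0 : ∀ t, 0 ≤ g t)
    (hgloc : ∀ t : ℝ, (∫⁻ s in Ioc 0 t, ENNReal.ofReal (g s) ∂K.measure) < ⊤)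
    (hgtop : (∫⁻ s in Ioi (0 : ℝ), ENNReal.ofReal (g s) ∂K.measure) = ⊤) :
    Tendsto (epsP K g) atTop atTop := by
  have hF : Tendsto (FP K g) atTop atTop := by
    refine tendsto_atTop_atTop_of_monotone (FP_mono hgloc) fun C => ?_
    rcases le_or_gt C 0 with hC | hC
    · exact ⟨0, hC.trans (FP_nonneg 0)⟩
    · have htop : mug K g (Ioi 0) = ⊤ := by
        rw [mug_apply _ measurableSet_Ioi]; exact hgtop
      have hU : ⋃ n : ℕ, Ioc (0:ℝ) n = Ioi 0 := by
        ext x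
        simp only [mem_iUnion, mem_Ioc, mem_Ioi]
        constructor
        · rintro ⟨n, h1, _⟩; exact h1
        · intro hx
          obtain ⟨n, hn⟩ := exists_nat_ge x
          exact ⟨n, hx, hn⟩
      have hmono : Monotone fun n : ℕ => Ioc (0:ℝ) n := fun i j hij =>
        Ioc_subset_Ioc_right (Nat.cast_le.2 hij)
      have htend := tendsto_measure_iUnion_atTop (μ := mug K g) hmono
      rw [hU, htop] at htend
      have hev : ∀ᶠ n : ℕ in atTop, ENNReal.ofReal C < mug K g (Ioc 0 n) :=
        htend.eventually_const_lt ENNReal.ofReal_lt_top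
      obtain ⟨n, hn⟩ := hev.exists
      refine ⟨n, ?_⟩
      have : ENNReal.ofReal C ≤ mug K g (Ioc 0 n) := le_of_lt hn
      rw [mug_Ioc hgloc] at this
      exact (ENNReal.ofReal_le_ofReal_iff (FP_nonneg _)).1 this
  have heq : epsP K g = fun t => Real.exp (FP K g t) := funext (epsP_eq hgmeas hg0)
  rw [heq]
  exact Real.tendsto_exp_atTop.comp hF

lemma Btilde_le (hKc : Continuous fun x => K x) (hgmeas : Measurable g) (hg0 : ∀ t, 0 ≤ g t)
    (hgloc : ∀ t : ℝ, (∫⁻ s in Ioc 0 t, ENNReal.ofReal (g s) ∂K.measure) < ⊤)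
    (hΓc : Continuous Γ) (hΓmono : Monotone Γ) (hΓpos : ∀ s, 0 < Γ s)
    (Λ : StieltjesFunction ℝ) (hΛ0 : ∀ t : ℝ, 0 ≤ t → 0 ≤ Λ t)
    {a δ : ℝ} (ha : 0 ≤ a) (hδ : 0 ≤ δ)
    (hbound : ∀ s, a ≤ s → Λ s ≤ δ * Γ s ^ 2) (t : ℝ) :
    BtildeP K g Γ Λ t ≤ (4 * (Λ a * ((HH K g Γ a).toReal * (Γ 0)⁻¹))) * epsP K g t
      + 4 * δ * epsP K g t ^ 2 := by
  have hΛa : 0 ≤ Λ a := hΛ0 a ha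
  have hca : 0 ≤ (HH K g Γ a).toReal := ENNReal.toReal_nonneg
  have hΓ0 : 0 ≤ (Γ 0)⁻¹ := inv_nonneg.2 (hΓpos 0).le
  have hepst : 0 < epsP K g t := epsP_pos t
  rw [Btilde_eq hKc hgmeas hg0 hgloc hΓc hΓmono hΓpos]
  refine ENNReal.toReal_le_of_le_ofReal ?_ ?_
  · have h4 : (0:ℝ) ≤ 4 * (Λ a * ((HH K g Γ a).toReal * (Γ 0)⁻¹)) := by positivity
    have h5 : (0:ℝ) ≤ 4 * δ * epsP K g t ^ 2 := by positivity
    nlinarith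
  have hHHt : HH K g Γ t ≤ ENNReal.ofReal ((Γ 0)⁻¹ * (2 * epsP K g t)) := by
    calc HH K g Γ t ≤ ENNReal.ofReal ((Γ 0)⁻¹) * Mfun K g t := HH_le hΓmono hΓpos t
      _ ≤ ENNReal.ofReal ((Γ 0)⁻¹) * ENNReal.ofReal (2 * epsP K g t) :=
          mul_le_mul_right (Mfun_le hKc hgmeas hg0 hgloc t) _
      _ = ENNReal.ofReal ((Γ 0)⁻¹ * (2 * epsP K g t)) :=
          (ENNReal.ofReal_mul hΓ0).symm
  have hMt : (Mfun K g t) ^ 2 ≤ ENNReal.ofReal ((2 * epsP K g t) ^ 2) := by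
    rw [ENNReal.ofReal_pow (by positivity)]
    exact pow_le_pow_left' (Mfun_le hKc hgmeas hg0 hgloc t) 2
  have hHHa : ENNReal.ofReal (Λ a) * HH K g Γ a
      = ENNReal.ofReal (Λ a * (HH K g Γ a).toReal) := by
    conv_lhs => rw [← ENNReal.ofReal_toReal (HH_fin hKc hgmeas hg0 hgloc hΓmono hΓpos a)]
    rw [← ENNReal.ofReal_mul hΛa]
  calc LL K g Γ Λ t
      ≤ 2 * (ENNReal.ofReal (Λ a) * HH K g Γ a) * HH K g Γ t
        + ENNReal.ofReal δ * (Mfun K g t) ^ 2 :=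
        LL_bound hKc hgmeas hg0 hgloc hΓc hΓmono hΓpos Λ hΛ0 ha hδ hbound t
    _ ≤ ENNReal.ofReal 2 * ENNReal.ofReal (Λ a * (HH K g Γ a).toReal)
          * ENNReal.ofReal ((Γ 0)⁻¹ * (2 * epsP K g t))
        + ENNReal.ofReal δ * ENNReal.ofReal ((2 * epsP K g t) ^ 2) := by
        refine add_le_add ?_ (mul_le_mul_right hMt _)
        rw [hHHa]
        have h2 : (2 : ℝ≥0∞) = ENNReal.ofReal 2 := by norm_num
        rw [h2]
        exact mul_le_mul_right hHHt _
    _ = ENNReal.ofReal (2 * (Λ a * (HH K g Γ a).toReal) * ((Γ 0)⁻¹ * (2 * epsP K g t))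
          + δ * (2 * epsP K g t) ^ 2) := by
        rw [← ENNReal.ofReal_mul (by norm_num), ← ENNReal.ofReal_mul (by positivity),
          ← ENNReal.ofReal_mul hδ, ← ENNReal.ofReal_add (by positivity) (by positivity)]
    _ ≤ ENNReal.ofReal ((4 * (Λ a * ((HH K g Γ a).toReal * (Γ 0)⁻¹))) * epsP K g t
          + 4 * δ * epsP K g t ^ 2) := by
        apply ENNReal.ofReal_le_ofReal
        ring_nf
        exact le_refl _

end Assembly

end RemAux

/-- Remark 3.1 of Section 3: if `K` is continuous nondecreasing with `K_0 = 0`, `g ≥ 0` locally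
`K`-integrable with `∫₀^∞ g dK = ∞`, `Γ` continuous nondecreasing positive and `Λ` nondecreasing
right-continuous nonnegative with `Λ_t Γ_t^{−2} → 0`, then `B̃_t / ε_t² → 0`; hence
`ε_t B̃_t^{−1/2} → ∞` whenever `B̃` is eventually positive. -/
theorem Btilde_div_eps_sq_tendsto_zero (K : StieltjesFunction ℝ)
    (hKc : Continuous fun x => K x) (hK0 : K 0 = 0)
    (g : ℝ → ℝ) (hgmeas : Measurable g) (hg0 : ∀ t, 0 ≤ g t)
    (hgloc : ∀ t : ℝ, (∫⁻ s in Ioc 0 t, ENNReal.ofReal (g s) ∂K.measure) < ⊤)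
    (hgtop : (∫⁻ s in Ioi (0 : ℝ), ENNReal.ofReal (g s) ∂K.measure) = ⊤)
    (Γ : ℝ → ℝ) (hΓc : Continuous Γ) (hΓmono : Monotone Γ) (hΓpos : ∀ t, 0 < Γ t)
    (Λ : StieltjesFunction ℝ) (hΛ0 : ∀ t : ℝ, 0 ≤ t → 0 ≤ Λ t)
    (hΛΓ : Tendsto (fun t => Λ t * ((Γ t) ^ 2)⁻¹) atTop (𝓝 0)) :
    Tendsto (fun t => BtildeP K g Γ Λ t / (epsP K g t) ^ 2) atTop (𝓝 0) ∧
      ((∀ᶠ t in atTop, 0 < BtildeP K g Γ Λ t) →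
        Tendsto (fun t => epsP K g t / Real.sqrt (BtildeP K g Γ Λ t)) atTop atTop) := by
  have hBnneg : ∀ t, 0 ≤ BtildeP K g Γ Λ t := fun t => integral_nonneg fun s => sq_nonneg _
  have heps := RemAux.eps_tendsto hgmeas hg0 hgloc hgtop
  have hepspos : ∀ t, 0 < epsP K g t := fun t => RemAux.epsP_pos t
  have hmain : Tendsto (fun t => BtildeP K g Γ Λ t / epsP K g t ^ 2) atTop (𝓝 0) := by
    rw [NormedAddCommGroup.tendsto_nhds_zero]
    intro ε hε
    have hδpos : 0 < ε / 16 := by positivity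
    have hev := hΛΓ.eventually_lt_const hδpos
    rw [eventually_atTop] at hev
    obtain ⟨a₀, ha₀⟩ := hev
    set a := max a₀ 0 with hadef
    have ha : 0 ≤ a := le_max_right _ _
    have hbound : ∀ s, a ≤ s → Λ s ≤ ε / 16 * Γ s ^ 2 := by
      intro s hs
      have h := ha₀ s ((le_max_left _ _).trans hs)
      have hΓ2 : (0:ℝ) < Γ s ^ 2 := pow_pos (hΓpos s) 2
      have h' : Λ s / Γ s ^ 2 < ε / 16 := by rwa [div_eq_mul_inv]
      have := (div_lt_iff₀ hΓ2).1 h'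
      linarith
    set C := 4 * (Λ a * ((RemAux.HH K g Γ a).toReal * (Γ 0)⁻¹)) with hC
    have hCnn : 0 ≤ C := by
      have h1 : 0 ≤ (RemAux.HH K g Γ a).toReal * (Γ 0)⁻¹ :=
        mul_nonneg ENNReal.toReal_nonneg (inv_nonneg.2 (hΓpos 0).le)
      have h2 : 0 ≤ Λ a * ((RemAux.HH K g Γ a).toReal * (Γ 0)⁻¹) :=
        mul_nonneg (hΛ0 a ha) h1
      rw [hC]; linarith
    have hb := fun t => RemAux.Btilde_le hKc hgmeas hg0 hgloc hΓc hΓmono hΓpos Λ hΛ0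
      ha hδpos.le hbound t
    have hev2 : ∀ᶠ t in atTop, (C + 1) * (4 / ε) ≤ epsP K g t :=
      heps.eventually_ge_atTop _
    filter_upwards [hev2] with t ht
    have het := hepspos t
    have hquot : BtildeP K g Γ Λ t / epsP K g t ^ 2 ≤ C / epsP K g t + 4 * (ε / 16) := by
      rw [div_le_iff₀ (by positivity : (0:ℝ) < epsP K g t ^ 2)]
      calc BtildeP K g Γ Λ t ≤ C * epsP K g t + 4 * (ε / 16) * epsP K g t ^ 2 := hb t
        _ = (C / epsP K g t + 4 * (ε / 16)) * epsP K g t ^ 2 := by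
            field_simp
    have hCt : C / epsP K g t ≤ ε / 4 := by
      rw [div_le_iff₀ het]
      have key : ε / 4 * ((C + 1) * (4 / ε)) = C + 1 := by field_simp
      have h3 : ε / 4 * ((C + 1) * (4 / ε)) ≤ ε / 4 * epsP K g t :=
        mul_le_mul_of_nonneg_left ht (by positivity)
      rw [key] at h3
      linarith
    rw [Real.norm_eq_abs, abs_of_nonneg (div_nonneg (hBnneg t) (by positivity))]
    have h16 : 4 * (ε / 16) = ε / 4 := by ring
    rw [h16] at hquot
    linarith
  refine ⟨hmain, fun hpos => ?_⟩
  have h1 : Tendsto (fun t => Real.sqrt (BtildeP K g Γ Λ t / epsP K g t ^ 2)) atTop (𝓝 0) := by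
    have := (Real.continuous_sqrt.tendsto 0).comp hmain
    simpa only [Real.sqrt_zero, Function.comp_def] using this
  have h2 : Tendsto (fun t => Real.sqrt (BtildeP K g Γ Λ t) / epsP K g t) atTop (𝓝 0) := by
    refine h1.congr fun t => ?_
    rw [Real.sqrt_div (hBnneg t), Real.sqrt_sq (hepspos t).le]
  have h3 : Tendsto (fun t => Real.sqrt (BtildeP K g Γ Λ t) / epsP K g t) atTop (𝓝[>] 0) := by
    refine tendsto_nhdsWithin_of_tendsto_nhds_of_eventually_within _ h2 ?_
    filter_upwards [hpos] with t ht
    exact div_pos (Real.sqrt_pos.2 ht) (hepspos t)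
  have h4 := h3.inv_tendsto_nhdsGT_zero
  refine h4.congr fun t => ?_
  simp [Pi.inv_apply, inv_div]
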